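/- Let q > 0 and let ν be a probability distribution on ℝ. For each D ≥ 1, let X_D ~ ν be a real random variable, let U_D and Û_D be random vectors in ℝ^D, and let Z_D be a standard Gaussian random vector in ℝ^D independent of (X_D, U_D, Û_D), with X_D also independent of (U_D, Û_D). Assume that ⟨U_D, Û_D⟩ → q and ‖Û_D‖² → q in probability as D → ∞. Then the random variable ⟨X_D·U_D + Z_D, Û_D⟩/√q converges in distribution, as D → ∞, to √q·X + ξ, where X ~ ν and ξ is a standard Gaussian random variable independent of X. -/

import Mathlib

open MeasureTheory ProbabilityTheory Filter
open scoped RealInnerProductSpace Topology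

section CavityAux

open Real
open scoped ENNReal NNReal

lemma my_integral_rexp_quadratic {b : ℝ} (hb : b < 0) (c d : ℝ) :
    ∫ x : ℝ, rexp (b * x ^ 2 + c * x + d)
      = Real.sqrt (π / -b) * rexp (d - c ^ 2 / (4 * b)) := by
  have hb' : (b : ℂ).re < 0 := by simpa using hb
  have h := integral_cexp_quadratic hb' c d
  have h2 : ∫ x : ℝ, Complex.exp (↑b * ↑x ^ 2 + ↑c * ↑x + ↑d)
      = ((∫ x : ℝ, rexp (b * x ^ 2 + c * x + d) : ℝ) : ℂ) := by
    rw [show (fun x : ℝ => Complex.exp (↑b * ↑x ^ 2 + ↑c * ↑x + ↑d))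
        = fun x : ℝ => ((rexp (b * x ^ 2 + c * x + d) : ℝ) : ℂ) from by
      funext x; rw [Complex.ofReal_exp]; push_cast; ring_nf]
    exact integral_ofReal
  have h3 : ((π : ℂ) / -(b : ℂ)) ^ (1 / 2 : ℂ)
      = ((Real.sqrt (π / -b) : ℝ) : ℂ) := by
    have hnb : (0:ℝ) ≤ π / -b := div_nonneg pi_pos.le (by linarith)
    rw [Real.sqrt_eq_rpow]
    rw [Complex.ofReal_cpow hnb]
    push_cast
    norm_num
  have h4 : Complex.exp ((d : ℂ) - (c:ℂ) ^ 2 / (4 * (b:ℂ)))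
      = ((rexp (d - c ^ 2 / (4 * b)) : ℝ) : ℂ) := by
    rw [Complex.ofReal_exp]; push_cast; ring_nf
  rw [h2, h3, h4] at h
  exact_mod_cast h

lemma gaussianPDFReal_conv {v w : ℝ≥0} (hv : v ≠ 0) (hw : w ≠ 0) (y : ℝ) :
    ∫ x : ℝ, gaussianPDFReal 0 v x * gaussianPDFReal x w y
      = gaussianPDFReal 0 (v + w) y := by
  have hv' : (0:ℝ) < v := lt_of_le_of_ne v.coe_nonneg (by exact_mod_cast (Ne.symm hv))
  have hw' : (0:ℝ) < w := lt_of_le_of_ne w.coe_nonneg (by exact_mod_cast (Ne.symm hw))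
  set b : ℝ := -(1/(2*(v:ℝ)) + 1/(2*(w:ℝ))) with hbdef
  have hvne : (v:ℝ) ≠ 0 := ne_of_gt hv'
  have hwne : (w:ℝ) ≠ 0 := ne_of_gt hw'
  have hb : b < 0 := by
    have h0 : (0:ℝ) < 1/(2*(v:ℝ)) + 1/(2*(w:ℝ)) := by positivity
    rw [hbdef]; linarith
  have hbne : b ≠ 0 := ne_of_lt hb
  have heq : (fun x : ℝ => gaussianPDFReal 0 v x * gaussianPDFReal x w y)
      = fun x : ℝ => (√(2*π*(v:ℝ)))⁻¹ * (√(2*π*(w:ℝ)))⁻¹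
          * rexp (b * x^2 + (y/(w:ℝ)) * x + (-(y^2)/(2*(w:ℝ)))) := by
    funext x
    simp only [gaussianPDFReal]
    rw [show ((√(2*π*(v:ℝ)))⁻¹ * rexp (-(x - 0)^2/(2*(v:ℝ))))
          * ((√(2*π*(w:ℝ)))⁻¹ * rexp (-(y - x)^2/(2*(w:ℝ))))
        = (√(2*π*(v:ℝ)))⁻¹ * (√(2*π*(w:ℝ)))⁻¹
          * (rexp (-(x - 0)^2/(2*(v:ℝ))) * rexp (-(y - x)^2/(2*(w:ℝ)))) from by ring]
    rw [← Real.exp_add]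
    congr 1
    rw [hbdef]
    field_simp
    ring
  rw [heq]
  rw [integral_const_mul, my_integral_rexp_quadratic hb]
  have hvw : (v:ℝ) + w ≠ 0 := by positivity
  have h4b : 4*b = -(2*((v:ℝ)+w))/((v:ℝ)*w) := by rw [hbdef]; field_simp; ring
  have hexp : (-(y^2)/(2*(w:ℝ))) - (y/(w:ℝ))^2 / (4*b) = -(y - 0)^2/(2*((v:ℝ)+(w:ℝ))) := by
    rw [h4b, div_div_eq_mul_div, div_neg, sub_neg_eq_add]
    field_simp
    ring
  have hconst : (√(2*π*(v:ℝ)))⁻¹ * ((√(2*π*(w:ℝ)))⁻¹ * √(π / -b))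
      = (√(2*π*((v:ℝ)+(w:ℝ))))⁻¹ := by
    rw [← Real.sqrt_inv, ← Real.sqrt_inv, ← Real.sqrt_inv,
      ← Real.sqrt_mul (by positivity), ← Real.sqrt_mul (by positivity)]
    congr 1
    rw [hbdef]
    field_simp
    ring
  simp only [gaussianPDFReal, NNReal.coe_add]
  rw [← hexp, ← hconst]
  ring

lemma gaussianPDFReal_le {w : ℝ≥0} (x y : ℝ) :
    gaussianPDFReal x w y ≤ (√(2*π*(w:ℝ)))⁻¹ := by
  rw [gaussianPDFReal]
  calc (√(2*π*(w:ℝ)))⁻¹ * rexp (-(y - x)^2/(2*(w:ℝ)))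
      ≤ (√(2*π*(w:ℝ)))⁻¹ * 1 := by
        apply mul_le_mul_of_nonneg_left _ (by positivity)
        rw [Real.exp_le_one_iff]
        have hw0 : (0:ℝ) ≤ (w:ℝ) := w.coe_nonneg
        have : (0:ℝ) ≤ (y-x)^2 := sq_nonneg _
        rcases eq_or_lt_of_le hw0 with h|h
        · simp [← h]
        · apply div_nonpos_of_nonpos_of_nonneg <;> [linarith; positivity]
    _ = (√(2*π*(w:ℝ)))⁻¹ := mul_one _

lemma gaussianPDF_jointly_measurable (w : ℝ≥0) :
    Measurable (Function.uncurry fun x y : ℝ => gaussianPDF x w y) := by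
  apply Measurable.ennreal_ofReal
  apply Continuous.measurable
  simp only [gaussianPDFReal, Function.uncurry]
  fun_prop

lemma gaussianReal_conv (v w : ℝ≥0) :
    ((gaussianReal 0 v).prod (gaussianReal 0 w)).map (fun p : ℝ × ℝ => p.1 + p.2)
      = gaussianReal 0 (v + w) := by
  by_cases hv : v = 0
  · subst hv
    rw [gaussianReal_zero_var, Measure.dirac_prod,
      Measure.map_map measurable_add measurable_prodMk_left]
    simp [Function.comp_def, Measure.map_id]
  by_cases hw : w = 0
  · subst hw
    rw [gaussianReal_zero_var, Measure.prod_dirac,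
      Measure.map_map measurable_add (measurable_prodMk_right : Measurable fun x : ℝ => (x, (0:ℝ)))]
    simp [Function.comp_def, Measure.map_id]
  have hvw : v + w ≠ 0 := by simp [hv, hw]
  ext s hs
  rw [Measure.map_apply measurable_add hs, Measure.prod_apply (measurable_add hs)]
  have h1 : ∀ x : ℝ, (gaussianReal 0 w) (Prod.mk x ⁻¹' ((fun p : ℝ × ℝ => p.1 + p.2) ⁻¹' s))
      = ∫⁻ y in s, gaussianPDF x w y := by
    intro x
    have h2 : Prod.mk x ⁻¹' ((fun p : ℝ × ℝ => p.1 + p.2) ⁻¹' s) = (fun y => x + y) ⁻¹' s := rfl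
    rw [h2, ← Measure.map_apply (measurable_const_add x) hs,
      gaussianReal_map_const_add (μ := 0) (v := w) x, zero_add,
      ← gaussianReal_apply x hw s]
  simp_rw [h1]
  have hmeas : Measurable fun x => ∫⁻ y in s, gaussianPDF x w y :=
    Measurable.lintegral_prod_right (gaussianPDF_jointly_measurable w)
  rw [gaussianReal_of_var_ne_zero 0 hv,
    lintegral_withDensity_eq_lintegral_mul _ (measurable_gaussianPDF 0 v) hmeas]
  simp only [Pi.mul_apply]
  have h3 : ∀ x : ℝ, gaussianPDF 0 v x * ∫⁻ y in s, gaussianPDF x w y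
      = ∫⁻ y in s, gaussianPDF 0 v x * gaussianPDF x w y := fun x =>
    (lintegral_const_mul _ ((gaussianPDF_jointly_measurable w).comp measurable_prodMk_left)).symm
  simp_rw [h3]
  rw [lintegral_lintegral_swap]
  swap
  · exact ((measurable_gaussianPDF 0 v).comp measurable_fst |>.mul
      (gaussianPDF_jointly_measurable w)).aemeasurable
  have h4 : ∀ y : ℝ, ∫⁻ x : ℝ, gaussianPDF 0 v x * gaussianPDF x w y
      = gaussianPDF 0 (v + w) y := by
    intro y
    have hint : Integrable (fun x : ℝ => gaussianPDFReal 0 v x * gaussianPDFReal x w y) := by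
      have : Integrable (fun x : ℝ => gaussianPDFReal x w y * gaussianPDFReal 0 v x) := by
        apply (integrable_gaussianPDFReal 0 v).bdd_mul (c := (√(2*π*(w:ℝ)))⁻¹)
        · apply Continuous.aestronglyMeasurable
          simp only [gaussianPDFReal]; fun_prop
        · refine ae_of_all _ (fun x => ?_)
          rw [Real.norm_eq_abs, abs_of_nonneg (gaussianPDFReal_nonneg _ _ _)]
          exact gaussianPDFReal_le x y
      exact this.congr (by filter_upwards with x using mul_comm _ _)
    calc ∫⁻ x : ℝ, gaussianPDF 0 v x * gaussianPDF x w y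
        = ∫⁻ x : ℝ, ENNReal.ofReal (gaussianPDFReal 0 v x * gaussianPDFReal x w y) := by
          congr 1 with x
          rw [gaussianPDF, gaussianPDF, ← ENNReal.ofReal_mul (gaussianPDFReal_nonneg _ _ _)]
      _ = ENNReal.ofReal (∫ x : ℝ, gaussianPDFReal 0 v x * gaussianPDFReal x w y) := by
          rw [ofReal_integral_eq_lintegral_ofReal hint]
          filter_upwards with x
          exact mul_nonneg (gaussianPDFReal_nonneg _ _ _) (gaussianPDFReal_nonneg _ _ _)
      _ = gaussianPDF 0 (v + w) y := by rw [gaussianPDFReal_conv hv hw y]; rfl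
  simp_rw [h4]
  rw [← gaussianReal_apply 0 hvw s]

lemma map_pi_gaussian_dot : ∀ (n : ℕ) (a : Fin n → ℝ),
    (Measure.pi fun _ : Fin n => gaussianReal 0 1).map (fun z => ∑ i, a i * z i)
      = gaussianReal 0 (∑ i, (NNReal.mk ((a i)^2) (sq_nonneg _))) := by
  intro n
  induction n with
  | zero =>
    intro a
    simp only [Finset.univ_eq_empty, Finset.sum_empty]
    rw [show (fun z : Fin 0 → ℝ => (0:ℝ)) = fun _ => 0 from rfl, Measure.map_const]
    simp
  | succ n ih =>
    intro a
    have hmp := measurePreserving_piFinSuccAbove (fun _ : Fin (n+1) => gaussianReal 0 1) 0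
    set e := MeasurableEquiv.piFinSuccAbove (fun _ : Fin (n+1) => ℝ) 0 with he
    have hmap : (Measure.pi fun _ : Fin (n+1) => gaussianReal 0 1)
        = ((gaussianReal 0 1).prod (Measure.pi fun _ : Fin n => gaussianReal 0 1)).map e.symm := by
      rw [← hmp.map_eq, MeasurableEquiv.map_symm_map]
    rw [hmap, Measure.map_map (by fun_prop) e.symm.measurable]
    have hcomp : ((fun z : Fin (n+1) → ℝ => ∑ i, a i * z i) ∘ e.symm)
        = (fun p : ℝ × ℝ => p.1 + p.2) ∘
          (Prod.map (fun x : ℝ => a 0 * x) (fun y : Fin n → ℝ => ∑ j, a (Fin.succAbove 0 j) * y j)) := by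
      funext p
      simp only [Function.comp_apply, Prod.map_apply, he,
        MeasurableEquiv.piFinSuccAbove_symm_apply]
      rw [Fin.sum_univ_succAbove (fun i => a i * (Fin.insertNthEquiv (fun _ => ℝ) 0 p) i) 0]
      simp
    rw [hcomp, ← Measure.map_map measurable_add (by fun_prop),
      ← Measure.map_prod_map _ _ (by fun_prop) (by fun_prop),
      ih (fun j => a (Fin.succAbove 0 j))]
    have h0 : (gaussianReal 0 1).map (fun x : ℝ => a 0 * x)
        = gaussianReal 0 (NNReal.mk ((a 0)^2) (sq_nonneg _)) := by
      rw [show (fun x : ℝ => a 0 * x) = (a 0 * ·) from rfl, gaussianReal_map_const_mul]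
      norm_num
    rw [h0, gaussianReal_conv]
    congr 1
    rw [Fin.sum_univ_succ]
    rfl

lemma integral_pi_gaussian_inner (f : ℝ → ℝ) (hf : Continuous f) (c sq : ℝ) (D : ℕ)
    (u : EuclideanSpace ℝ (Fin D)) :
    ∫ z : EuclideanSpace ℝ (Fin D), f ((c + ⟪z, u⟫) / sq)
        ∂(Measure.map (WithLp.toLp 2) (Measure.pi fun _ : Fin D => gaussianReal 0 1))
      = ∫ t : ℝ, f ((c + ‖u‖ * t) / sq) ∂(gaussianReal 0 1) := by
  rw [integral_map (WithLp.measurable_toLp 2 _).aemeasurable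
    (show AEStronglyMeasurable (fun z : EuclideanSpace ℝ (Fin D) => f ((c + ⟪z, u⟫) / sq)) _ from
      (hf.comp (by fun_prop)).aestronglyMeasurable)]
  have hinner : ∀ z : Fin D → ℝ, ⟪WithLp.toLp 2 z, u⟫ = ∑ i, u i * z i := by
    intro z
    simp [PiLp.inner_apply, RCLike.inner_apply, conj_trivial, mul_comm]
  simp_rw [hinner]
  have hL : Measurable (fun z : Fin D → ℝ => ∑ i, u i * z i) := by
    apply Finset.measurable_sum
    intro i _
    exact (measurable_pi_apply i).const_mul _
  have hmap : (Measure.pi fun _ : Fin D => gaussianReal 0 1).map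
        (fun z : Fin D → ℝ => ∑ i, u i * z i)
      = gaussianReal 0 (∑ i, (NNReal.mk ((u i)^2) (sq_nonneg _))) :=
    map_pi_gaussian_dot D (fun i => u i)
  have hV : (∑ i, (NNReal.mk ((u i)^2) (sq_nonneg _))) = (NNReal.mk (‖u‖^2) (sq_nonneg _)) * 1 := by
    have hcast : ((∑ i, (NNReal.mk ((u i)^2) (sq_nonneg _)) : ℝ≥0) : ℝ) = ∑ i, (u i)^2 := by
      rw [NNReal.coe_sum]; rfl
    rw [← NNReal.coe_inj, hcast, NNReal.coe_mul, NNReal.coe_one, mul_one, NNReal.coe_mk,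
      EuclideanSpace.norm_eq, Real.sq_sqrt (by positivity)]
    simp [Real.norm_eq_abs, sq_abs]
  have key : (Measure.pi fun _ : Fin D => gaussianReal 0 1).map
        (fun z : Fin D → ℝ => ∑ i, u i * z i)
      = (gaussianReal 0 1).map (fun t : ℝ => ‖u‖ * t) := by
    rw [hmap, hV, show (fun t : ℝ => ‖u‖ * t) = (‖u‖ * ·) from rfl,
      gaussianReal_map_const_mul, mul_zero]
  have h1 : ∫ z : Fin D → ℝ, f ((c + ∑ i, u i * z i) / sq)
        ∂(Measure.pi fun _ : Fin D => gaussianReal 0 1)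
      = ∫ s : ℝ, f ((c + s) / sq)
        ∂((Measure.pi fun _ : Fin D => gaussianReal 0 1).map
            (fun z : Fin D → ℝ => ∑ i, u i * z i)) := by
    rw [integral_map hL.aemeasurable]
    exact (hf.comp (by fun_prop)).aestronglyMeasurable
  rw [h1, key, integral_map (by fun_prop)]
  exact (hf.comp (by fun_prop)).aestronglyMeasurable

lemma bdd_integrable {α : Type*} [MeasurableSpace α] (μ : Measure α) [IsProbabilityMeasure μ]
    {g : α → ℝ} (hg : AEStronglyMeasurable g μ) (C : ℝ) (h : ∀ a, ‖g a‖ ≤ C) :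
    Integrable g μ :=
  Integrable.mono' (integrable_const C) hg (ae_of_all _ h)


end CavityAux

/-- Cavity lemma, part (ii): if `⟨U_D, Û_D⟩ → q` and `‖Û_D‖² → q` in probability, with
`Z_D` standard Gaussian independent of `(X_D, U_D, Û_D)` and `X_D ~ ν` independent of
`(U_D, Û_D)`, then `⟨X_D U_D + Z_D, Û_D⟩/√q` converges in distribution to
`√q·X + ξ` with `X ~ ν` and `ξ ~ N(0,1)` independent. -/
theorem cavity_channel_convergence
    (q : ℝ) (hq : 0 < q)
    (ν : Measure ℝ) [IsProbabilityMeasure ν]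
    {Ω : Type*} [MeasureSpace Ω] [IsProbabilityMeasure (ℙ : Measure Ω)]
    (X : ℕ → Ω → ℝ) (U Uhat Z : (D : ℕ) → Ω → EuclideanSpace ℝ (Fin D))
    (hXm : ∀ D, Measurable (X D))
    (hUm : ∀ D, Measurable (U D)) (hUhatm : ∀ D, Measurable (Uhat D))
    (hZm : ∀ D, Measurable (Z D))
    (hXlaw : ∀ D, Measure.map (X D) ℙ = ν)
    (hZlaw : ∀ D, Measure.map (Z D) ℙ =
      Measure.map (WithLp.toLp 2) (Measure.pi fun _ : Fin D => gaussianReal 0 1))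
    (hZindep : ∀ D, IndepFun (fun ω => (X D ω, U D ω, Uhat D ω)) (Z D) ℙ)
    (hXindep : ∀ D, IndepFun (X D) (fun ω => (U D ω, Uhat D ω)) ℙ)
    (hoverlap : TendstoInMeasure ℙ (fun D ω => ⟪U D ω, Uhat D ω⟫) atTop fun _ => q)
    (hnorm : TendstoInMeasure ℙ (fun D ω => ‖Uhat D ω‖ ^ 2) atTop fun _ => q) :
    ∀ f : BoundedContinuousFunction ℝ ℝ,
      Tendsto
        (fun D => ∫ ω, f (⟪X D ω • U D ω + Z D ω, Uhat D ω⟫ / Real.sqrt q) ∂ℙ)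
        atTop
        (𝓝 (∫ p : ℝ × ℝ, f (Real.sqrt q * p.1 + p.2)
          ∂(ν.prod (gaussianReal 0 1)))) := by
  intro f
  have hsq : Real.sqrt q ≠ 0 := by positivity
  -- the two auxiliary kernels
  set φ : ℝ × ℝ → ℝ := fun p => ∫ t, f ((p.1 + p.2 * t) / Real.sqrt q) ∂(gaussianReal 0 1) with hφ
  set ψ : ℝ × ℝ → ℝ := fun p => ∫ x, φ (x * p.1, p.2) ∂ν with hψ
  have hφcont : Continuous φ := by
    apply continuous_of_dominated (bound := fun _ => ‖f‖)
    · intro p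
      exact (f.continuous.comp (by fun_prop)).aestronglyMeasurable
    · intro p
      filter_upwards with t using f.norm_coe_le_norm _
    · exact integrable_const _
    · filter_upwards with t
      exact f.continuous.comp (by fun_prop)
  have hφbdd : ∀ p, ‖φ p‖ ≤ ‖f‖ := by
    intro p
    calc ‖φ p‖ ≤ ‖f‖ * ((gaussianReal 0 1 : Measure ℝ) Set.univ).toReal :=
          norm_integral_le_of_norm_le_const (ae_of_all _ fun t => f.norm_coe_le_norm _)
      _ = ‖f‖ := by simp
  have hψcont : Continuous ψ := by
    apply continuous_of_dominated (bound := fun _ => ‖f‖)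
    · intro p
      exact (hφcont.comp (by fun_prop)).aestronglyMeasurable
    · intro p
      filter_upwards with x using hφbdd _
    · exact integrable_const _
    · filter_upwards with x
      exact hφcont.comp (by fun_prop)
  have hψbdd : ∀ p, ‖ψ p‖ ≤ ‖f‖ := by
    intro p
    calc ‖ψ p‖ ≤ ‖f‖ * (ν Set.univ).toReal :=
          norm_integral_le_of_norm_le_const (ae_of_all _ fun x => hφbdd _)
      _ = ‖f‖ := by simp
  -- Step A+B : rewrite the integral for each D
  have hstep : ∀ D, ∫ ω, f (⟪X D ω • U D ω + Z D ω, Uhat D ω⟫ / Real.sqrt q) ∂ℙ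
      = ∫ ω, ψ (⟪U D ω, Uhat D ω⟫, ‖Uhat D ω‖) ∂ℙ := by
    intro D
    set γD : Measure (EuclideanSpace ℝ (Fin D)) :=
      Measure.map (WithLp.toLp 2) (Measure.pi fun _ : Fin D => gaussianReal 0 1) with hγDdef
    haveI hPγD : IsProbabilityMeasure γD :=
      Measure.isProbabilityMeasure_map (WithLp.measurable_toLp 2 _).aemeasurable
    have hTm : Measurable (fun ω => (X D ω, U D ω, Uhat D ω)) :=
      (hXm D).prodMk ((hUm D).prodMk (hUhatm D))
    have hG : Measurable (fun pz : (ℝ × EuclideanSpace ℝ (Fin D) × EuclideanSpace ℝ (Fin D)) ×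
          EuclideanSpace ℝ (Fin D) =>
        f ((pz.1.1 * ⟪pz.1.2.1, pz.1.2.2⟫ + ⟪pz.2, pz.1.2.2⟫) / Real.sqrt q)) := by
      apply f.continuous.measurable.comp
      apply Measurable.div_const
      apply Measurable.add
      · exact (measurable_fst.comp measurable_fst).mul
          ((measurable_fst.comp (measurable_snd.comp measurable_fst)).inner
            (measurable_snd.comp (measurable_snd.comp measurable_fst)))
      · exact measurable_snd.inner (measurable_snd.comp (measurable_snd.comp measurable_fst))
    have hjoint : Measure.map (fun ω => ((X D ω, U D ω, Uhat D ω), Z D ω)) ℙ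
        = (Measure.map (fun ω => (X D ω, U D ω, Uhat D ω)) ℙ).prod γD := by
      rw [hγDdef, ← hZlaw D]
      exact (indepFun_iff_map_prod_eq_prod_map_map hTm.aemeasurable
        (hZm D).aemeasurable).mp (hZindep D)
    haveI : IsProbabilityMeasure (Measure.map (fun ω => (X D ω, U D ω, Uhat D ω)) ℙ) :=
      Measure.isProbabilityMeasure_map hTm.aemeasurable
    have h1 : ∫ ω, f (⟪X D ω • U D ω + Z D ω, Uhat D ω⟫ / Real.sqrt q) ∂ℙ
        = ∫ pz, f ((pz.1.1 * ⟪pz.1.2.1, pz.1.2.2⟫ + ⟪pz.2, pz.1.2.2⟫) / Real.sqrt q)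
            ∂((Measure.map (fun ω => (X D ω, U D ω, Uhat D ω)) ℙ).prod γD) := by
      rw [← hjoint, integral_map (hTm.prodMk (hZm D)).aemeasurable hG.aestronglyMeasurable]
      congr 1 with ω
      rw [inner_add_left, real_inner_smul_left]
    rw [h1, integral_prod _ (bdd_integrable _ hG.aestronglyMeasurable ‖f‖
      (fun pz => f.norm_coe_le_norm _))]
    have h2 : ∀ p : ℝ × EuclideanSpace ℝ (Fin D) × EuclideanSpace ℝ (Fin D),
        (∫ z, f ((p.1 * ⟪p.2.1, p.2.2⟫ + ⟪z, p.2.2⟫) / Real.sqrt q) ∂γD)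
        = φ (p.1 * ⟪p.2.1, p.2.2⟫, ‖p.2.2‖) := by
      intro p
      rw [hφ]
      exact integral_pi_gaussian_inner f f.continuous (p.1 * ⟪p.2.1, p.2.2⟫) (Real.sqrt q) D p.2.2
    simp_rw [h2]
    rw [integral_map hTm.aemeasurable (show AEStronglyMeasurable
      (fun p : ℝ × EuclideanSpace ℝ (Fin D) × EuclideanSpace ℝ (Fin D) =>
        φ (p.1 * ⟪p.2.1, p.2.2⟫, ‖p.2.2‖)) _ from
      (hφcont.measurable.comp ((measurable_fst.mul ((measurable_fst.comp measurable_snd).inner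
        (measurable_snd.comp measurable_snd))).prodMk
        (measurable_snd.comp measurable_snd).norm)).aestronglyMeasurable)]
    -- now use independence of X from (U, Uhat)
    have hWm : Measurable (fun ω => (⟪U D ω, Uhat D ω⟫, ‖Uhat D ω‖)) :=
      ((hUm D).inner (hUhatm D)).prodMk (hUhatm D).norm
    have hXW : IndepFun (X D) (fun ω => (⟪U D ω, Uhat D ω⟫, ‖Uhat D ω‖)) ℙ :=
      (hXindep D).comp measurable_id
        ((measurable_fst.inner measurable_snd).prodMk measurable_snd.norm)
    have hjoint2 : Measure.map (fun ω => (X D ω, (⟪U D ω, Uhat D ω⟫, ‖Uhat D ω‖))) ℙ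
        = ν.prod (Measure.map (fun ω => (⟪U D ω, Uhat D ω⟫, ‖Uhat D ω‖)) ℙ) := by
      rw [← hXlaw D]
      exact (indepFun_iff_map_prod_eq_prod_map_map (hXm D).aemeasurable
        hWm.aemeasurable).mp hXW
    haveI : IsProbabilityMeasure (Measure.map (fun ω => (⟪U D ω, Uhat D ω⟫, ‖Uhat D ω‖)) ℙ) :=
      Measure.isProbabilityMeasure_map hWm.aemeasurable
    have hG2 : Measurable (fun pw : ℝ × ℝ × ℝ => φ (pw.1 * pw.2.1, pw.2.2)) :=
      hφcont.measurable.comp ((measurable_fst.mul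
        (measurable_fst.comp measurable_snd)).prodMk (measurable_snd.comp measurable_snd))
    have h3 : ∫ ω, φ (X D ω * ⟪U D ω, Uhat D ω⟫, ‖Uhat D ω‖) ∂ℙ
        = ∫ pw : ℝ × ℝ × ℝ, φ (pw.1 * pw.2.1, pw.2.2)
            ∂(ν.prod (Measure.map (fun ω => (⟪U D ω, Uhat D ω⟫, ‖Uhat D ω‖)) ℙ)) := by
      rw [← hjoint2,
        integral_map ((hXm D).prodMk hWm).aemeasurable (show AEStronglyMeasurable
          (fun pw : ℝ × ℝ × ℝ => φ (pw.1 * pw.2.1, pw.2.2)) _ from hG2.aestronglyMeasurable)]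
    rw [h3, integral_prod_symm _ (bdd_integrable _ hG2.aestronglyMeasurable ‖f‖
      (fun pw => hφbdd _)),
      integral_map hWm.aemeasurable
        (by exact hψcont.measurable.aestronglyMeasurable :
          AEStronglyMeasurable (fun w : ℝ × ℝ => ∫ x, φ (x * w.1, w.2) ∂ν) _)]
  -- Step C: identify the limit as ψ (q, √q)
  have hd : ∀ (x t : ℝ), (x * q + Real.sqrt q * t) / Real.sqrt q = Real.sqrt q * x + t := by
    intro x t
    have h2 : Real.sqrt q * Real.sqrt q = q := Real.mul_self_sqrt hq.le
    rw [div_eq_iff hsq]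
    linear_combination (-x) * h2
  have htarget : (∫ p : ℝ × ℝ, f (Real.sqrt q * p.1 + p.2) ∂(ν.prod (gaussianReal 0 1)))
      = ψ (q, Real.sqrt q) := by
    rw [hψ]
    rw [integral_prod _ (bdd_integrable _ (show AEStronglyMeasurable
      (fun p : ℝ × ℝ => f (Real.sqrt q * p.1 + p.2)) _ from (f.continuous.measurable.comp
      (by fun_prop : Measurable fun p : ℝ × ℝ => Real.sqrt q * p.1 + p.2)).aestronglyMeasurable)
      ‖f‖ (fun p => f.norm_coe_le_norm _))]
    simp only [hφ]
    congr 1 with x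
    congr 1 with t
    rw [hd]
  rw [htarget]
  -- Step D: convergence from convergence in measure
  simp_rw [hstep]
  have hWmeas : ∀ D, Measurable (fun ω => (⟪U D ω, Uhat D ω⟫, ‖Uhat D ω‖)) := fun D =>
    ((hUm D).inner (hUhatm D)).prodMk (hUhatm D).norm
  apply tendsto_of_subseq_tendsto
  intro ns hns
  obtain ⟨ms1, hms1mono, hms1⟩ := TendstoInMeasure.exists_seq_tendsto_ae
    (fun ε hε => (hoverlap ε hε).comp hns)
  obtain ⟨ms2, hms2mono, hms2⟩ := TendstoInMeasure.exists_seq_tendsto_ae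
    (fun ε hε => ((hnorm ε hε).comp hns).comp hms1mono.tendsto_atTop)
  refine ⟨fun i => ms1 (ms2 i), ?_⟩
  have hae : ∀ᵐ ω ∂(ℙ : Measure Ω), Tendsto
      (fun i => ψ (⟪U (ns (ms1 (ms2 i))) ω, Uhat (ns (ms1 (ms2 i))) ω⟫,
        ‖Uhat (ns (ms1 (ms2 i))) ω‖)) atTop (𝓝 (ψ (q, Real.sqrt q))) := by
    filter_upwards [hms1, hms2] with ω h1 h2
    have hA : Tendsto (fun i => ⟪U (ns (ms1 (ms2 i))) ω, Uhat (ns (ms1 (ms2 i))) ω⟫)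
        atTop (𝓝 q) := h1.comp hms2mono.tendsto_atTop
    have hR : Tendsto (fun i => ‖Uhat (ns (ms1 (ms2 i))) ω‖) atTop (𝓝 (Real.sqrt q)) := by
      have hsqrt : Tendsto (fun i => Real.sqrt (‖Uhat (ns (ms1 (ms2 i))) ω‖ ^ 2))
          atTop (𝓝 (Real.sqrt q)) :=
        (Real.continuous_sqrt.tendsto q).comp h2
      simpa [Real.sqrt_sq (norm_nonneg _)] using hsqrt
    exact (hψcont.tendsto _).comp (hA.prodMk_nhds hR)
  rw [show ψ (q, Real.sqrt q) = ∫ _ω : Ω, ψ (q, Real.sqrt q) ∂(ℙ : Measure Ω) from by simp]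
  apply tendsto_integral_of_dominated_convergence (fun _ => ‖f‖)
  · intro i
    exact (hψcont.measurable.comp (hWmeas _)).aestronglyMeasurable
  · exact integrable_const _
  · intro i
    filter_upwards with ω using hψbdd _
  · exact hae
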